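/- Let E be a discrete space of cardinality 2^ω and X = E ∪ {p} its one-point Lindelöfication. Then Bob has a winning strategy in the long tightness game G_1^{ω₁}(Ω_p, Ω_p): at each inning he picks a point of Alice's set not previously chosen, which is possible because every member of Ω_p is uncountable, and at the end his uncountably many chosen points have p in their closure. -/

import Mathlib

universe u

open Topology Set

/-- The one-point Lindelöfication of the discrete space `E`: the extra point is `none`,
every point of `E` is isolated, and a set containing `none` is open iff its complement in
`E` is countable. -/
instance lindelofication (E : Type u) : TopologicalSpace (Option E) where
  IsOpen U := none ∈ U → {e : E | some e ∉ U}.Countable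
  isOpen_univ := by
    intro _
    convert Set.countable_empty
    simp
  isOpen_inter := by
    intro U V hU hV h
    refine ((hU h.1).union (hV h.2)).mono ?_
    intro e he
    simp only [Set.mem_setOf_eq, Set.mem_inter_iff, not_and_or] at he
    simpa using he
  isOpen_sUnion := by
    intro S hS h
    obtain ⟨s, hs, hns⟩ := h
    refine (hS s hs hns).mono ?_
    intro e he hs'
    exact he ⟨s, hs, hs'⟩

universe v

open Topology

/-- A strategy for Bob in the tightness game `G_1^κ(Ω_p, Ω_p)`: at inning `ξ < κ`, given the
history of Alice's previous moves and Alice's current set `A` (with `p ∈ closure A`),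
Bob picks a point of `A`. -/
structure BobStratOne (X : Type u) [TopologicalSpace X] (p : X) (κ : Ordinal.{v}) where
  move : ∀ ξ : Ordinal.{v}, ξ < κ → (∀ α : Ordinal.{v}, α < ξ → Set X) → Set X → X
  mem : ∀ ξ hξ hist A, p ∈ closure A → move ξ hξ hist A ∈ A

/-- The strategy is winning: for every play by Alice of sets having `p` in their closure,
the set of Bob's chosen points has `p` in its closure. -/
def BobStratOne.Winning {X : Type u} [TopologicalSpace X] {p : X} {κ : Ordinal.{v}}
    (S : BobStratOne X p κ) : Prop :=
  ∀ f : ∀ ξ : Ordinal.{v}, ξ < κ → Set X, (∀ ξ hξ, p ∈ closure (f ξ hξ)) →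
    p ∈ closure {x | ∃ (ξ : Ordinal.{v}) (hξ : ξ < κ),
      S.move ξ hξ (fun α hα => f α (hα.trans hξ)) (f ξ hξ) = x}

lemma isOpen_iff' {E : Type u} (U : Set (Option E)) :
    IsOpen U ↔ (none ∈ U → {e : E | some e ∉ U}.Countable) := Iff.rfl

lemma none_mem_closure {E : Type u} {A : Set (Option E)}
    (h : ¬ {e : E | some e ∈ A}.Countable) : none ∈ closure A := by
  rw [mem_closure_iff]
  intro U hU hnU
  have hc := (isOpen_iff' U).1 hU hnU
  by_contra hemp
  apply h
  refine hc.mono ?_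
  intro e he hU'
  exact hemp ⟨some e, hU', he⟩

lemma uncountable_of_none_mem_closure {E : Type u} {A : Set (Option E)}
    (h : none ∈ closure A) (hn : none ∉ A) : ¬ {e : E | some e ∈ A}.Countable := by
  intro hc
  rw [mem_closure_iff] at h
  have hop : IsOpen Aᶜ := by
    rw [isOpen_iff']
    intro _
    simpa using hc
  obtain ⟨x, hx1, hx2⟩ := h Aᶜ hop hn
  exact hx1 hx2

open Classical in
noncomputable def bmove (E : Type u) : (ξ : Ordinal.{u}) →
    ((α : Ordinal.{u}) → α < ξ → Set (Option E)) → Set (Option E) → Option E :=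
  fun ξ hist A =>
    if none ∈ A then none
    else if h : (A \ {x | ∃ (α : Ordinal.{u}) (hα : α < ξ),
        bmove E α (fun β hβ => hist β (hβ.trans hα)) (hist α hα) = x}).Nonempty
      then h.choose else none
termination_by ξ => ξ
decreasing_by all_goals exact hα

/-- Bob's previous picks. -/
def picks (E : Type u) (ξ : Ordinal.{u})
    (hist : (α : Ordinal.{u}) → α < ξ → Set (Option E)) : Set (Option E) :=
  {x | ∃ (α : Ordinal.{u}) (hα : α < ξ),
    bmove E α (fun β hβ => hist β (hβ.trans hα)) (hist α hα) = x}

open Classical in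
lemma bmove_eq (E : Type u) (ξ : Ordinal.{u}) (hist) (A : Set (Option E)) :
    bmove E ξ hist A = if none ∈ A then none
      else if h : (A \ picks E ξ hist).Nonempty then h.choose else none := by
  rw [bmove]; rfl

lemma countable_Iio {ξ : Ordinal.{u}} (hξ : ξ < (Cardinal.aleph 1).ord) :
    Countable (Set.Iio ξ) := by
  have h1 : Cardinal.mk (Set.Iio ξ) = Cardinal.lift.{u+1} ξ.card := Ordinal.mk_Iio_ordinal ξ
  have h2 : ξ.card < Cardinal.aleph 1 := Cardinal.lt_ord.1 hξ
  have h3 : ξ.card ≤ Cardinal.aleph0 := by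
    rwa [← Cardinal.succ_aleph0, Order.lt_succ_iff] at h2
  rw [← Cardinal.mk_le_aleph0_iff, h1, ← Cardinal.lift_aleph0.{u+1, u}]
  exact Cardinal.lift_le.2 h3

lemma picks_countable (E : Type u) {ξ : Ordinal.{u}} (hξ : ξ < (Cardinal.aleph 1).ord)
    (hist : (α : Ordinal.{u}) → α < ξ → Set (Option E)) :
    (picks E ξ hist).Countable := by
  have := countable_Iio hξ
  have : (picks E ξ hist) ⊆ Set.range (fun a : Set.Iio ξ =>
      bmove E a.1 (fun β hβ => hist β (hβ.trans a.2)) (hist a.1 a.2)) := by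
    rintro x ⟨α, hα, rfl⟩
    exact ⟨⟨α, hα⟩, rfl⟩
  exact (Set.countable_range _).mono this

lemma bmove_fresh (E : Type u) {ξ : Ordinal.{u}} (hξ : ξ < (Cardinal.aleph 1).ord)
    (hist : (α : Ordinal.{u}) → α < ξ → Set (Option E)) {A : Set (Option E)}
    (hn : none ∉ A) (hunc : ¬ {e : E | some e ∈ A}.Countable) :
    bmove E ξ hist A ∈ A \ picks E ξ hist := by
  rw [bmove_eq, if_neg hn]
  have hne : (A \ picks E ξ hist).Nonempty := by
    by_contra hemp
    rw [Set.not_nonempty_iff_eq_empty, Set.diff_eq_empty] at hemp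
    apply hunc
    have : {e : E | some e ∈ A} ⊆ (fun e => some e) ⁻¹' picks E ξ hist :=
      fun e he => hemp he
    exact ((picks_countable E hξ hist).preimage (Option.some_injective E)).mono this
  rw [dif_pos hne]
  exact hne.choose_spec

/-- In the one-point Lindelöfication `X = E ∪ {p}` of a discrete space of cardinality `2^ω`,
Bob has a winning strategy in the long tightness game `G_1^{ω₁}(Ω_p, Ω_p)`. -/
theorem bob_winning_lindelofication (E : Type u)
    (hE : Cardinal.mk E = Cardinal.continuum.{u}) :
    ∃ S : BobStratOne.{u, u} (Option E) none (Cardinal.aleph 1).ord, S.Winning := by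
  refine ⟨⟨fun ξ hξ hist A => bmove E ξ hist A, ?_⟩, ?_⟩
  · intro ξ hξ hist A hcl
    show bmove E ξ hist A ∈ A
    by_cases hn : none ∈ A
    · rw [bmove_eq, if_pos hn]; exact hn
    · exact (bmove_fresh E hξ hist hn (uncountable_of_none_mem_closure hcl hn)).1
  · intro f hf
    have hκ : True := trivial
    show none ∈ closure {x : Option E | ∃ (ξ : Ordinal.{u})
      (hξ : ξ < (Cardinal.aleph 1).ord),
      bmove E ξ (fun α hα => f α (hα.trans hξ)) (f ξ hξ) = x}
    set T : Set (Option E) := {x | ∃ (ξ : Ordinal.{u}) (hξ : ξ < (Cardinal.aleph 1).ord),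
      bmove E ξ (fun α hα => f α (hα.trans hξ)) (f ξ hξ) = x} with hT
    by_cases hc : ∃ (ξ : Ordinal.{u}) (hξ : ξ < (Cardinal.aleph 1).ord), none ∈ f ξ hξ
    · obtain ⟨ξ, hξ, hn⟩ := hc
      have : none ∈ T := ⟨ξ, hξ, by rw [bmove_eq, if_pos hn]⟩
      exact subset_closure this
    · push_neg at hc
      have key : ∀ (ξ : Ordinal.{u}) (hξ : ξ < (Cardinal.aleph 1).ord),
          bmove E ξ (fun α hα => f α (hα.trans hξ)) (f ξ hξ) ∈
            f ξ hξ \ picks E ξ (fun α hα => f α (hα.trans hξ)) := fun ξ hξ =>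
        bmove_fresh E hξ _ (hc ξ hξ)
          (uncountable_of_none_mem_closure (hf ξ hξ) (hc ξ hξ))
      set g : Set.Iio (Cardinal.aleph 1).ord → Option E := fun a =>
        bmove E a.1 (fun α hα => f α (hα.trans a.2)) (f a.1 a.2) with hg
      have hmono : ∀ a a' : Set.Iio (Cardinal.aleph 1).ord, a.1 < a'.1 → g a ≠ g a' := by
        intro a a' hlt heq
        have hmem : g a ∈ picks E a'.1 (fun α hα => f α (hα.trans a'.2)) :=
          ⟨a.1, hlt, rfl⟩
        rw [heq] at hmem
        exact (key a'.1 a'.2).2 hmem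
      have hinj : Function.Injective g := by
        intro a a' heq
        rcases lt_trichotomy a.1 a'.1 with h | h | h
        · exact absurd heq (hmono a a' h)
        · exact Subtype.ext h
        · exact absurd heq.symm (hmono a' a h)
      have hTrange : ∀ a : Set.Iio (Cardinal.aleph 1).ord, g a ∈ T := fun a => ⟨a.1, a.2, rfl⟩
      have hTunc : ¬ T.Countable := by
        intro hcnt
        have : Countable T := hcnt.to_subtype
        have : Countable (Set.Iio (Cardinal.aleph 1).ord) :=
          Function.Injective.countable (f := fun a : Set.Iio (Cardinal.aleph 1).ord => (⟨g a, hTrange a⟩ : T))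
            (fun a a' h => hinj (congrArg Subtype.val h))
        have h1 : Cardinal.mk (Set.Iio (Cardinal.aleph 1).ord) ≤ Cardinal.aleph0 := Cardinal.mk_le_aleph0
        rw [Ordinal.mk_Iio_ordinal, Cardinal.card_ord, ← Cardinal.lift_aleph0.{u+1, u},
          Cardinal.lift_le] at h1
        exact absurd h1 (not_le.2 Cardinal.aleph0_lt_aleph_one)
      have hnone : none ∉ T := by
        rintro ⟨ξ, hξ, hb⟩
        exact hc ξ hξ (hb ▸ (key ξ hξ).1)
      apply none_mem_closure
      intro hcnt
      apply hTunc
      have : T ⊆ (fun e : E => some e) '' {e : E | some e ∈ T} := by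
        intro x hx
        match x with
        | none => exact absurd hx hnone
        | some e => exact ⟨e, hx, rfl⟩
      exact (hcnt.image _).mono this
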